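/- Let (W,S) be a Coxeter system with W finite and S finite. Then the sum, over all strictly increasing chains S₀ ⊊ S₁ ⊊ ⋯ ⊊ S_k of subsets of S (for all k ≥ 0, including the one-term chains consisting of a single subset, and allowing S₀ = ∅), of (−1)^k / |⟨S₀⟩|, equals 1/|W|. Here ⟨S₀⟩ denotes the standard parabolic subgroup generated by S₀, with ⟨∅⟩ the trivial subgroup. -/

import Mathlib

private lemma aux_sign {a b : ℕ} (h : b = a + 1) (c : ℚ) :
    (-1 : ℚ) ^ a / c + (-1 : ℚ) ^ b / c = 0 := by
  subst h; rw [← add_div, pow_succ]; ring_nf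

theorem coxeter_chain_sum_eq_inv_card
    {B : Type*} [Finite B] {W : Type*} [Group W] [Finite W]
    (M : CoxeterMatrix B) (cs : CoxeterSystem M W) :
    ∑ᶠ l ∈ {l : List (Finset B) | l ≠ [] ∧ List.Chain' (· ⊂ ·) l},
        ((-1 : ℚ) ^ (l.length - 1) /
          (Nat.card ↥(Subgroup.closure (cs.simple '' ↑(l.headI))) : ℚ))
      = 1 / (Nat.card W : ℚ) := by
  classical
  cases nonempty_fintype B
  set f : List (Finset B) → ℚ := fun l => (-1 : ℚ) ^ (l.length - 1) /
      (Nat.card ↥(Subgroup.closure (cs.simple '' ↑(l.headI))) : ℚ) with hf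
  set C : Set (List (Finset B)) := {l | l ≠ [] ∧ List.Chain' (· ⊂ ·) l} with hC
  have hfin : C.Finite := by
    apply (List.finite_length_le (Finset B) (Fintype.card (Finset B))).subset
    rintro l ⟨-, hch⟩
    have hnd : l.Nodup := (List.isChain_iff_pairwise.mp hch).imp fun h => ne_of_irrefl h
    exact hnd.length_le_card
  set u : Finset B := Finset.univ with hu
  have humem : [u] ∈ hfin.toFinset := by simp [hC, List.Chain']
  rw [finsum_mem_eq_finite_toFinset_sum _ hfin, ← Finset.sum_erase_add _ _ humem]
  have h1 : f [u] = 1 / (Nat.card W : ℚ) := by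
    simp only [hf, List.length_cons, List.length_nil, List.headI, hu, Finset.coe_univ,
      Set.image_univ, cs.subgroup_closure_range_simple, Subgroup.card_top]
    norm_num
  have h0 : ∑ l ∈ (hfin.toFinset.erase [u]), f l = 0 := by
    apply Finset.sum_involution
      (g := fun l _ => if l.getLast? = some u then l.dropLast else l ++ [u])
    case g_mem =>
      intro l hl
      obtain ⟨hlne, hlmem⟩ := Finset.mem_erase.mp hl
      rw [Set.Finite.mem_toFinset] at hlmem
      obtain ⟨hnil, hch⟩ := hlmem
      by_cases hlast : l.getLast? = some u
      · rw [if_pos hlast]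
        have hlu : l.getLast hnil = u := by
          rwa [List.getLast?_eq_getLast hnil, Option.some_inj] at hlast
        rw [Finset.mem_erase, Set.Finite.mem_toFinset]
        refine ⟨?_, ?_, hch.sublist l.dropLast_sublist⟩
        · intro hdl
          have hl2 : l = [u, u] := by
            conv_lhs => rw [← List.dropLast_append_getLast hnil]
            rw [hdl, hlu]; rfl
          rw [hl2] at hch
          exact ssubset_irrefl u (List.isChain_cons_cons.mp hch).1
        · intro hdl
          have hlen : 2 ≤ l.length := by
            rcases l with _ | ⟨a, _ | ⟨b, t⟩⟩
            · exact absurd rfl hnil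
            · exfalso; apply hlne; simp at hlast; simp [hlast]
            · simp
          have := congrArg List.length hdl
          rw [List.length_dropLast] at this
          simp at this
          omega
      · rw [if_neg hlast]
        rw [Finset.mem_erase, Set.Finite.mem_toFinset]
        refine ⟨by simp [hnil], by simp, ?_⟩
        unfold List.Chain'
        rw [List.isChain_append]
        refine ⟨hch, List.isChain_singleton _, fun x hx y hy => ?_⟩
        simp only [List.head?_cons, Option.mem_def, Option.some_inj] at hy
        subst hy
        rw [Option.mem_def, List.getLast?_eq_getLast hnil] at hx
        have hxu : x ≠ u := by
          rintro rfl
          exact hlast (by rw [List.getLast?_eq_getLast hnil]; exact hx)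
        exact Finset.ssubset_univ_iff.mpr hxu
    case hg₁ =>
      intro l hl
      obtain ⟨hlne, hlmem⟩ := Finset.mem_erase.mp hl
      rw [Set.Finite.mem_toFinset] at hlmem
      obtain ⟨hnil, hch⟩ := hlmem
      by_cases hlast : l.getLast? = some u
      · rw [if_pos hlast]
        have hlen : 2 ≤ l.length := by
          rcases l with _ | ⟨a, _ | ⟨b, t⟩⟩
          · exact absurd rfl hnil
          · exfalso; apply hlne; simp at hlast; simp [hlast]
          · simp
        have hhead : l.dropLast.headI = l.headI := by
          rcases l with _ | ⟨a, _ | ⟨b, t⟩⟩ <;> simp_all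
        simp only [hf, hhead, List.length_dropLast]
        rw [add_comm]
        apply aux_sign
        omega
      · rw [if_neg hlast]
        have hhead : (l ++ [u]).headI = l.headI := by
          rcases l with _ | ⟨a, t⟩
          · exact absurd rfl hnil
          · simp
        have h1 : 1 ≤ l.length := List.length_pos_iff.mpr hnil
        simp only [hf, hhead, List.length_append, List.length_cons, List.length_nil]
        apply aux_sign
        omega
    case hg₃ =>
      intro l hl _
      obtain ⟨hlne, hlmem⟩ := Finset.mem_erase.mp hl
      rw [Set.Finite.mem_toFinset] at hlmem
      by_cases hlast : l.getLast? = some u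
      · rw [if_pos hlast]
        intro h
        have := congrArg List.length h
        rw [List.length_dropLast] at this
        have h1 : 1 ≤ l.length := List.length_pos_iff.mpr hlmem.1
        omega
      · rw [if_neg hlast]
        intro h
        have := congrArg List.length h
        simp at this
    case hg₄ =>
      intro l hl
      obtain ⟨hlne, hlmem⟩ := Finset.mem_erase.mp hl
      rw [Set.Finite.mem_toFinset] at hlmem
      obtain ⟨hnil, hch⟩ := hlmem
      by_cases hlast : l.getLast? = some u
      · rw [if_pos hlast]
        have hlu : l.getLast hnil = u := by
          rwa [List.getLast?_eq_getLast hnil, Option.some_inj] at hlast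
        have hlen : 2 ≤ l.length := by
          rcases l with _ | ⟨a, _ | ⟨b, t⟩⟩
          · exact absurd rfl hnil
          · exfalso; apply hlne; simp at hlast; simp [hlast]
          · simp
        have hne2 : l.dropLast.getLast? ≠ some u := by
          have hdecomp := List.dropLast_append_getLast hnil
          rw [hlu] at hdecomp
          rw [← hdecomp] at hch
          unfold List.Chain' at hch
          rw [List.isChain_append] at hch
          obtain ⟨-, -, hrel⟩ := hch
          intro hsome
          exact ssubset_irrefl u (hrel u hsome u (by simp))
        rw [if_neg hne2, ← hlu]
        exact List.dropLast_append_getLast hnil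
      · rw [if_neg hlast]
        rw [if_pos (List.getLast?_concat (l := l))]
        exact List.dropLast_concat
  rw [h0, zero_add]
  exact h1
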